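/- arXiv:2002.09233 — 3 statements merged into one kernel-verified Lean document; each statement's English description precedes it below -/
import Mathlib

section
/- Let $A$ be a $d\times d$ matrix with nonnegative real entries, viewed over the max-times semiring $([0,\infty),\vee,\cdot)$. There exists a vector $x$ with all entries strictly positive such that $A\odot x \le x$ (entrywise) if and only if the maximum cycle mean $\lambda(A)$ of $A$ satisfies $\lambda(A)\le 1$. -/
open scoped NNReal

noncomputable section

/-- Max-times matrix-vector product: `(A ⊙ x) i = max_j (A i j * x j)`. -/
def maxMul {d : ℕ} (A : Matrix (Fin d) (Fin d) ℝ≥0) (x : Fin d → ℝ≥0) : Fin d → ℝ≥0 :=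
  fun i => Finset.univ.sup fun j => A i j * x j

/-- Weight of the directed cycle `c 0 → c 1 → ⋯ → c r → c 0`
(the edge `j → i` contributes the entry `A i j`). -/
def cycleWeight {d : ℕ} (A : Matrix (Fin d) (Fin d) ℝ≥0) {r : ℕ}
    (c : Fin (r + 1) → Fin d) : ℝ≥0 :=
  ∏ t, A (c (t + 1)) (c t)

/-- Maximum cycle mean: the supremum of the geometric means of the weights of
(simple) directed cycles of the digraph of `A`; it is `0` when this digraph is acyclic. -/
noncomputable def maxCycleMean {d : ℕ} (A : Matrix (Fin d) (Fin d) ℝ≥0) : ℝ≥0 :=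
  sSup {m | ∃ (r : ℕ) (c : Fin (r + 1) → Fin d),
    Function.Injective c ∧ m = cycleWeight A c ^ (((r : ℝ) + 1)⁻¹)}

namespace MaxTimesAux

variable {d : ℕ}

/-- Weight of the walk `w 0 → w 1 → ⋯ → w m`. -/
def wW (A : Matrix (Fin d) (Fin d) ℝ≥0) (w : ℕ → Fin d) (m : ℕ) : ℝ≥0 :=
  ∏ k ∈ Finset.range m, A (w k) (w (k + 1))

lemma wW_add (A : Matrix (Fin d) (Fin d) ℝ≥0) (w : ℕ → Fin d) (a b : ℕ) :
    wW A w (a + b) = wW A w a * wW A (fun k => w (a + k)) b := by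
  simp only [wW, Finset.prod_range_add, Nat.add_assoc]

/-- Removing a closed subwalk. -/
lemma wW_reduce (A : Matrix (Fin d) (Fin d) ℝ≥0) (w : ℕ → Fin d) {p q m : ℕ}
    (hpq : p < q) (hqm : q ≤ m) (hw : w p = w q) :
    wW A w m = wW A (fun k => if k < p then w k else w (k + (q - p))) (m - (q - p))
      * wW A (fun k => w (p + k)) (q - p) := by
  have hps : p + (q - p) = q := by omega
  have h1 : wW A w m
      = (wW A w p * wW A (fun k => w (p + k)) (q - p)) * wW A (fun k => w (q + k)) (m - q) := by
    calc wW A w m = wW A w ((p + (q - p)) + (m - q)) := by rw [show (p + (q - p)) + (m - q) = m by omega]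
      _ = wW A w (p + (q - p)) * wW A (fun k => w ((p + (q - p)) + k)) (m - q) := wW_add A w _ _
      _ = (wW A w p * wW A (fun k => w (p + k)) (q - p)) * wW A (fun k => w (q + k)) (m - q) := by
          rw [wW_add]; simp only [hps]
  have h2 : wW A (fun k => if k < p then w k else w (k + (q - p))) (m - (q - p))
      = wW A (fun k => if k < p then w k else w (k + (q - p))) p
        * wW A (fun k => w (q + k)) (m - q) := by
    rw [show m - (q - p) = p + (m - q) by omega, wW_add]
    congr 1
    refine congrArg (fun f => wW A f (m - q)) ?_
    funext k
    show (if p + k < p then w (p + k) else w (p + k + (q - p))) = w (q + k)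
    rw [if_neg (by omega)]
    congr 1
    omega
  have h3 : wW A (fun k => if k < p then w k else w (k + (q - p))) p = wW A w p := by
    simp only [wW]
    refine Finset.prod_congr rfl fun k hk => ?_
    rw [Finset.mem_range] at hk
    rw [if_pos hk]
    by_cases h : k + 1 < p
    · rw [if_pos h]
    · rw [if_neg h]
      have e1 : k + 1 + (q - p) = q := by omega
      have e2 : k + 1 = p := by omega
      rw [e1, ← hw, e2]
  rw [h1, h2, h3]
  ring

lemma closedWalk_le_one (A : Matrix (Fin d) (Fin d) ℝ≥0)
    (hcyc : ∀ (r : ℕ) (c : Fin (r + 1) → Fin d), Function.Injective c → cycleWeight A c ≤ 1) :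
    ∀ m (w : ℕ → Fin d), 1 ≤ m → w m = w 0 → wW A w m ≤ 1 := by
  intro m
  induction m using Nat.strong_induction_on with
  | _ m IH =>
    intro w hm hclosed
    by_cases h : ∃ p q, p < q ∧ q ≤ m ∧ ¬(p = 0 ∧ q = m) ∧ w p = w q
    · obtain ⟨p, q, hpq, hqm, hne, hw⟩ := h
      have hsplit := wW_reduce A w hpq hqm hw
      set s := q - p with hs
      have hs1 : 1 ≤ s := by omega
      have hsm : s < m := by omega
      have hms1 : 1 ≤ m - s := by omega
      have h1 : wW A (fun k => w (p + k)) s ≤ 1 := by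
        refine IH s hsm _ hs1 ?_
        show w (p + s) = w (p + 0)
        rw [show p + s = q by omega, show p + 0 = p by omega, hw]
      have h2 : wW A (fun k => if k < p then w k else w (k + s)) (m - s) ≤ 1 := by
        refine IH (m - s) (by omega) _ hms1 ?_
        show (if m - s < p then w (m - s) else w (m - s + s))
            = (if 0 < p then w 0 else w (0 + s))
        rw [if_neg (by omega), show m - s + s = m by omega, hclosed]
        by_cases hp : 0 < p
        · rw [if_pos hp]
        · rw [if_neg hp, show 0 + s = q by omega, ← hw, show p = 0 by omega]
      calc wW A w m
          = wW A (fun k => if k < p then w k else w (k + s)) (m - s)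
            * wW A (fun k => w (p + k)) s := hsplit
        _ ≤ 1 * 1 := mul_le_mul' h2 h1
        _ = 1 := one_mul 1
    · push_neg at h
      obtain ⟨r, rfl⟩ : ∃ r, m = r + 1 := ⟨m - 1, by omega⟩
      have hinj : ∀ a b, a < b → b ≤ r → w a ≠ w b := by
        intro a b hab hbr
        exact h a b hab (by omega) (by omega)
      set c : Fin (r + 1) → Fin d := fun t => w (r - t.val) with hc
      have hcinj : Function.Injective c := by
        intro t t' htc
        have ht := t.isLt
        have ht' := t'.isLt
        by_contra hne
        have hvne : t.val ≠ t'.val := fun hv => hne (Fin.ext hv)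
        rcases lt_or_gt_of_ne hvne with hlt | hlt
        · exact hinj (r - t'.val) (r - t.val) (by omega) (by omega) htc.symm
        · exact hinj (r - t.val) (r - t'.val) (by omega) (by omega) htc
      have hcw : cycleWeight A c ≤ 1 := hcyc r c hcinj
      have hfb : ∀ t : Fin (r + 1), (if (t : ℕ) = r then r else r - 1 - (t : ℕ)) < r + 1 := by
        intro t; split <;> omega
      set f : Fin (r + 1) → Fin (r + 1) :=
        fun t => ⟨if (t : ℕ) = r then r else r - 1 - (t : ℕ), hfb t⟩ with hf
      have hfinv : Function.Involutive f := by
        intro t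
        have ht := t.isLt
        apply Fin.ext
        show (if (if (t : ℕ) = r then r else r - 1 - (t : ℕ)) = r then r
            else r - 1 - (if (t : ℕ) = r then r else r - 1 - (t : ℕ))) = (t : ℕ)
        by_cases h1 : (t : ℕ) = r
        · rw [if_pos h1, if_pos rfl]; omega
        · rw [if_neg h1, if_neg (by omega)]; omega
      set e := Function.Involutive.toPerm f hfinv with he
      have hval : wW A w (r + 1) = cycleWeight A c := by
        have h6 : cycleWeight A c
            = ∏ t : Fin (r + 1), A (w ((e t : Fin (r + 1)) : ℕ)) (w (((e t : Fin (r + 1)) : ℕ) + 1)) := by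
          simp only [cycleWeight]
          refine Finset.prod_congr rfl fun t _ => ?_
          have ht := t.isLt
          have het : ((e t : Fin (r + 1)) : ℕ) = if (t : ℕ) = r then r else r - 1 - (t : ℕ) := rfl
          simp only [hc]
          by_cases h1 : (t : ℕ) = r
          · have htl : t = Fin.last r := Fin.ext (by rw [h1, Fin.val_last])
            have h2 : t + 1 = 0 := by rw [htl, Fin.last_add_one]
            rw [het, if_pos h1, h2, hclosed, h1]
            simp
          · have h2 : ((t + 1 : Fin (r + 1)) : ℕ) = (t : ℕ) + 1 := by
              apply Fin.val_add_one_of_lt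
              rw [Fin.lt_def, Fin.val_last]; omega
            have e1 : r - 1 - (t : ℕ) + 1 = r - (t : ℕ) := by omega
            have e2 : r - ((t : ℕ) + 1) = r - 1 - (t : ℕ) := by omega
            rw [het, if_neg h1, h2, e1, e2]
        have h7 : (∏ t : Fin (r + 1),
              A (w ((e t : Fin (r + 1)) : ℕ)) (w (((e t : Fin (r + 1)) : ℕ) + 1)))
            = ∏ k : Fin (r + 1), A (w (k : ℕ)) (w ((k : ℕ) + 1)) :=
          Equiv.prod_comp e (fun k : Fin (r + 1) => A (w (k : ℕ)) (w ((k : ℕ) + 1)))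
        rw [h6, h7]
        exact (Fin.prod_univ_eq_prod_range (fun k => A (w k) (w (k + 1))) (r + 1)).symm
      rw [hval]
      exact hcw

/-- The set of weights of walks of length `< d` starting at `i`. -/
def walkSet (A : Matrix (Fin d) (Fin d) ℝ≥0) (i : Fin d) : Set ℝ≥0 :=
  {v | ∃ m, ∃ w : ℕ → Fin d, m < d ∧ w 0 = i ∧ v = wW A w m}

/-- A bound on the entries of `A`. -/
def Mb (A : Matrix (Fin d) (Fin d) ℝ≥0) : ℝ≥0 :=
  1 ⊔ Finset.univ.sup fun p : Fin d × Fin d => A p.1 p.2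

lemma entry_le_Mb (A : Matrix (Fin d) (Fin d) ℝ≥0) (i j : Fin d) : A i j ≤ Mb A :=
  le_sup_of_le_right (Finset.le_sup (f := fun p : Fin d × Fin d => A p.1 p.2)
    (Finset.mem_univ (i, j)))

lemma one_le_Mb (A : Matrix (Fin d) (Fin d) ℝ≥0) : 1 ≤ Mb A := le_sup_left

lemma wW_le_pow (A : Matrix (Fin d) (Fin d) ℝ≥0) (w : ℕ → Fin d) (m : ℕ) :
    wW A w m ≤ Mb A ^ m := by
  calc wW A w m ≤ ∏ _k ∈ Finset.range m, Mb A :=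
        Finset.prod_le_prod' fun k _ => entry_le_Mb A _ _
    _ = Mb A ^ m := by rw [Finset.prod_const, Finset.card_range]

lemma walkSet_bdd (A : Matrix (Fin d) (Fin d) ℝ≥0) (i : Fin d) : BddAbove (walkSet A i) := by
  refine ⟨Mb A ^ d, ?_⟩
  rintro v ⟨m, w, hm, _, rfl⟩
  exact (wW_le_pow A w m).trans (pow_le_pow_right₀ (one_le_Mb A) hm.le)

lemma one_mem_walkSet (A : Matrix (Fin d) (Fin d) ℝ≥0) (hd : 0 < d) (i : Fin d) :
    (1 : ℝ≥0) ∈ walkSet A i :=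
  ⟨0, fun _ => i, hd, rfl, by simp [wW]⟩

lemma walk_le_sSup (A : Matrix (Fin d) (Fin d) ℝ≥0) (hd : 0 < d)
    (hcw : ∀ m (w : ℕ → Fin d), 1 ≤ m → w m = w 0 → wW A w m ≤ 1) :
    ∀ m (w : ℕ → Fin d), wW A w m ≤ sSup (walkSet A (w 0)) := by
  intro m
  induction m using Nat.strong_induction_on with
  | _ m IH =>
    intro w
    by_cases hmd : m < d
    · exact le_csSup (walkSet_bdd A _) ⟨m, w, hmd, rfl, rfl⟩
    · push_neg at hmd
      obtain ⟨a, ha, b, hb, hab, hwab⟩ :=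
        Finset.exists_ne_map_eq_of_card_lt_of_maps_to
          (s := Finset.range (d + 1)) (t := (Finset.univ : Finset (Fin d)))
          (by simp) (fun a _ => Finset.mem_univ (w a))
      rw [Finset.mem_range] at ha hb
      have hab' : min a b < max a b := by omega
      have hqm : max a b ≤ m := by omega
      have hw : w (min a b) = w (max a b) := by
        rcases le_total a b with h' | h'
        · rw [min_eq_left h', max_eq_right h', hwab]
        · rw [min_eq_right h', max_eq_left h', hwab]
      set p := min a b with hp
      set q := max a b with hq
      set s := q - p with hs
      have hsplit := wW_reduce A w hab' hqm hw
      have h1 : wW A (fun k => w (p + k)) s ≤ 1 := by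
        refine hcw s _ (by omega) ?_
        show w (p + s) = w (p + 0)
        rw [show p + s = q by omega, show p + 0 = p by omega, hw]
      have hw'0 : (fun k => if k < p then w k else w (k + s)) 0 = w 0 := by
        show (if 0 < p then w 0 else w (0 + s)) = w 0
        by_cases hp0 : 0 < p
        · rw [if_pos hp0]
        · rw [if_neg hp0, show 0 + s = q by omega, ← hw, show p = 0 by omega]
      calc wW A w m
          = wW A (fun k => if k < p then w k else w (k + s)) (m - s)
            * wW A (fun k => w (p + k)) s := hsplit
        _ ≤ wW A (fun k => if k < p then w k else w (k + s)) (m - s) * 1 :=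
            mul_le_mul' le_rfl h1
        _ = wW A (fun k => if k < p then w k else w (k + s)) (m - s) := mul_one _
        _ ≤ sSup (walkSet A ((fun k => if k < p then w k else w (k + s)) 0)) :=
            IH (m - s) (by omega) _
        _ = sSup (walkSet A (w 0)) := by rw [hw'0]

end MaxTimesAux

open MaxTimesAux

/-- There is a strictly positive vector `x` with `A ⊙ x ≤ x` (entrywise) iff the
maximum cycle mean of `A` is at most `1`. -/
theorem stmt0 {d : ℕ} (A : Matrix (Fin d) (Fin d) ℝ≥0) :
    (∃ x : Fin d → ℝ≥0, (∀ i, 0 < x i) ∧ ∀ i, maxMul A x i ≤ x i) ↔ maxCycleMean A ≤ 1 := by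
  constructor
  · rintro ⟨x, hxpos, hxle⟩
    apply csSup_le'
    rintro v ⟨r, c, hcinj, rfl⟩
    have hstep : ∀ t : Fin (r + 1), A (c (t + 1)) (c t) * x (c t) ≤ x (c (t + 1)) := by
      intro t
      refine le_trans ?_ (hxle (c (t + 1)))
      exact Finset.le_sup (f := fun j => A (c (t + 1)) j * x j) (Finset.mem_univ (c t))
    have hprod : cycleWeight A c * ∏ t, x (c t) ≤ ∏ t, x (c t) := by
      have h1 : ∏ t : Fin (r + 1), (A (c (t + 1)) (c t) * x (c t))
          ≤ ∏ t : Fin (r + 1), x (c (t + 1)) :=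
        Finset.prod_le_prod' fun t _ => hstep t
      rw [Finset.prod_mul_distrib] at h1
      have h2 : ∏ t : Fin (r + 1), x (c (t + 1)) = ∏ t : Fin (r + 1), x (c t) :=
        Equiv.prod_comp (Equiv.addRight (1 : Fin (r + 1))) (fun t => x (c t))
      rw [h2] at h1
      exact h1
    have hPne : (∏ t : Fin (r + 1), x (c t)) ≠ 0 := by
      rw [Finset.prod_ne_zero_iff]
      exact fun t _ => (hxpos (c t)).ne'
    have hcw : cycleWeight A c ≤ 1 := by
      have h3 := (le_div_iff₀ (pos_iff_ne_zero.mpr hPne)).mpr hprod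
      rwa [div_self hPne] at h3
    exact NNReal.rpow_le_one hcw (by positivity)
  · intro hle
    rcases Nat.eq_zero_or_pos d with hd | hd
    · subst hd
      exact ⟨fun _ => 1, fun i => i.elim0, fun i => i.elim0⟩
    · have bddC : BddAbove {m | ∃ (r : ℕ) (c : Fin (r + 1) → Fin d),
          Function.Injective c ∧ m = cycleWeight A c ^ (((r : ℝ) + 1)⁻¹)} := by
        refine ⟨Mb A, ?_⟩
        rintro v ⟨r, c, hcinj, rfl⟩
        have h1 : cycleWeight A c ≤ Mb A ^ (r + 1) := by
          calc cycleWeight A c ≤ ∏ _t : Fin (r + 1), Mb A :=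
                Finset.prod_le_prod' fun t _ => entry_le_Mb A _ _
            _ = Mb A ^ (r + 1) := by
                rw [Finset.prod_const, Finset.card_univ, Fintype.card_fin]
        have h2 : (Mb A ^ (r + 1) : ℝ≥0) ^ (((r : ℝ) + 1)⁻¹) = Mb A := by
          rw [← NNReal.rpow_natCast (Mb A) (r + 1), ← NNReal.rpow_mul]
          have h3 : ((r + 1 : ℕ) : ℝ) * ((r : ℝ) + 1)⁻¹ = 1 := by
            push_cast
            rw [mul_inv_cancel₀]
            positivity
          rw [h3, NNReal.rpow_one]
        calc cycleWeight A c ^ (((r : ℝ) + 1)⁻¹)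
            ≤ (Mb A ^ (r + 1) : ℝ≥0) ^ (((r : ℝ) + 1)⁻¹) :=
              NNReal.rpow_le_rpow h1 (by positivity)
          _ = Mb A := h2
      have hcyc : ∀ (r : ℕ) (c : Fin (r + 1) → Fin d),
          Function.Injective c → cycleWeight A c ≤ 1 := by
        intro r c hcinj
        have hmem := le_csSup bddC (Set.mem_setOf.mpr ⟨r, c, hcinj, rfl⟩)
        have h1 : cycleWeight A c ^ (((r : ℝ) + 1)⁻¹) ≤ 1 := hmem.trans hle
        by_contra hgt
        push_neg at hgt
        have h2 : (1 : ℝ≥0) < cycleWeight A c ^ (((r : ℝ) + 1)⁻¹) := by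
          have := NNReal.rpow_lt_rpow hgt (show (0 : ℝ) < ((r : ℝ) + 1)⁻¹ by positivity)
          rwa [NNReal.one_rpow] at this
        exact absurd h1 (not_le.mpr h2)
      have hcw := closedWalk_le_one A hcyc
      refine ⟨fun i => sSup (walkSet A i), ?_, ?_⟩
      · intro i
        exact lt_of_lt_of_le one_pos (le_csSup (walkSet_bdd A i) (one_mem_walkSet A hd i))
      · intro i
        rw [maxMul]
        apply Finset.sup_le
        intro j _
        by_cases hA : A i j = 0
        · simp [hA]
        · rw [mul_comm, ← le_div_iff₀ (pos_iff_ne_zero.mpr hA)]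
          refine csSup_le ⟨1, one_mem_walkSet A hd j⟩ ?_
          rintro v ⟨m, w, hm, hw0, rfl⟩
          rw [le_div_iff₀ (pos_iff_ne_zero.mpr hA)]
          have hkey : wW A w m * A i j
              = wW A (fun k => if k = 0 then i else w (k - 1)) (m + 1) := by
            simp only [wW]
            rw [Finset.prod_range_succ']
            congr 1
            show A i j = A (if (0:ℕ) = 0 then i else w (0 - 1)) (if (0:ℕ) + 1 = 0 then i else w (0 + 1 - 1))
            simp [hw0]
          have hw'0 : (fun k => if k = 0 then i else w (k - 1)) 0 = i := rfl
          calc wW A w m * A i j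
              = wW A (fun k => if k = 0 then i else w (k - 1)) (m + 1) := hkey
            _ ≤ sSup (walkSet A ((fun k => if k = 0 then i else w (k - 1)) 0)) :=
                walk_le_sSup A hd hcw (m + 1) _
            _ = sSup (walkSet A i) := by rw [hw'0]

end
end

section
/- Let $A$ be a $d\times d$ nonnegative matrix over the max-times semiring with maximum cycle mean $\lambda(A)=1$. Let $S\subseteq\{1,\dots,d\}$ be the union of the supports of all critical cycles (cycles whose geometric mean of weights equals $1$). If $x$ has all entries strictly positive and $A\odot x\le x$ entrywise, then $A_{SS}\odot x_S = x_S$, where $A_{SS}$ and $x_S$ denote the restrictions to indices in $S$. -/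
open scoped NNReal

noncomputable section

/-- Termwise equality from equality of products together with termwise `≤`. -/
lemma prod_eq_forcing {n : ℕ} (f g : Fin n → ℝ≥0) (hle : ∀ t, f t ≤ g t)
    (hpos : ∀ t, 0 < g t) (h : ∏ t, f t = ∏ t, g t) : ∀ t, f t = g t := by
  by_contra hc
  push_neg at hc
  obtain ⟨t0, ht0⟩ := hc
  have hposf : ∀ t, 0 < f t := by
    intro t
    by_contra hz
    push_neg at hz
    have hfz : f t = 0 := le_antisymm hz zero_le
    have : (∏ t, f t) = 0 := Finset.prod_eq_zero (Finset.mem_univ t) hfz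
    have hg : (0:ℝ≥0) < ∏ t, g t := Finset.prod_pos fun i _ => hpos i
    rw [h] at this
    exact absurd this hg.ne'
  have : (∏ t, f t) < ∏ t, g t :=
    Finset.prod_lt_prod (fun i _ => hposf i) (fun i _ => hle i)
      ⟨t0, Finset.mem_univ t0, lt_of_le_of_ne (hle t0) ht0⟩
  exact absurd h this.ne

/-- If `λ(A) = 1`, `S` is the union of the supports of the critical cycles
(cycles of weight `1`), and `x > 0` satisfies `A ⊙ x ≤ x`, then `A_{SS} ⊙ x_S = x_S`. -/
theorem stmt2 {d : ℕ} (A : Matrix (Fin d) (Fin d) ℝ≥0)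
    (hA : maxCycleMean A = 1)
    (S : Set (Fin d))
    (hS : S = {i | ∃ (r : ℕ) (c : Fin (r + 1) → Fin d),
      Function.Injective c ∧ cycleWeight A c = 1 ∧ ∃ t, c t = i})
    (x : Fin d → ℝ≥0) (hx : ∀ i, 0 < x i)
    (hsub : ∀ i, maxMul A x i ≤ x i) :
    ∀ i ∈ S, sSup ((fun j => A i j * x j) '' S) = x i := by
  intro i hi
  -- every entry of the product is ≤ x i
  have hbd : ∀ j, A i j * x j ≤ x i := fun j =>
    le_trans (Finset.le_sup (f := fun j => A i j * x j) (Finset.mem_univ j)) (hsub i)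
  have hbdd : BddAbove ((fun j => A i j * x j) '' S) := by
    refine ⟨x i, ?_⟩
    rintro y ⟨j, _, rfl⟩
    exact hbd j
  -- get the critical cycle through i
  obtain ⟨r, c, hinj, hw, t, hct⟩ := hS ▸ hi
  -- termwise inequalities along the cycle
  set f : Fin (r + 1) → ℝ≥0 := fun t => A (c (t + 1)) (c t) * x (c t) with hf
  set g : Fin (r + 1) → ℝ≥0 := fun t => x (c (t + 1)) with hg
  have hle : ∀ t, f t ≤ g t := fun t =>
    le_trans (Finset.le_sup (f := fun j => A (c (t + 1)) j * x j) (Finset.mem_univ (c t)))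
      (hsub (c (t + 1)))
  have hprod : ∏ t, f t = ∏ t, g t := by
    have h1 : ∏ t, f t = (∏ t, A (c (t + 1)) (c t)) * ∏ t, x (c t) := by
      rw [← Finset.prod_mul_distrib]
    have h2 : ∏ t, g t = ∏ t, x (c t) :=
      Equiv.prod_comp (Equiv.addRight (1 : Fin (r + 1))) (fun t => x (c t))
    rw [h1, h2]
    have : (∏ t, A (c (t + 1)) (c t)) = 1 := hw
    rw [this, one_mul]
  have heq : ∀ t, f t = g t :=
    prod_eq_forcing f g hle (fun t => hx _) hprod
  -- lower bound: using the predecessor of i on the cycle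
  have hkey : A (c t) (c (t - 1)) * x (c (t - 1)) = x (c t) := by
    have := heq (t - 1)
    simpa [hf, hg, sub_add_cancel] using this
  have hmemS : c (t - 1) ∈ S := by
    rw [hS]
    exact ⟨r, c, hinj, hw, t - 1, rfl⟩
  have hlow : x i ≤ sSup ((fun j => A i j * x j) '' S) := by
    have : A i (c (t - 1)) * x (c (t - 1)) = x i := by rw [← hct]; exact hkey
    rw [← this]
    exact le_csSup hbdd ⟨c (t - 1), hmemS, rfl⟩
  refine le_antisymm ?_ hlow
  refine csSup_le ⟨A i (c (t-1)) * x (c (t-1)), ⟨c (t-1), hmemS, rfl⟩⟩ ?_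
  rintro y ⟨j, _, rfl⟩
  exact hbd j

end
end

section
/- (Diamond) Consider the DAG on $\{1,2,3,4\}$ with edges $1\to2, 1\to3, 2\to4, 3\to4$ and positive coefficients $c_{21},c_{31},c_{42},c_{43}$ satisfying $c_{42}c_{21}\ge c_{43}c_{31}$. Let $X_1=Z_1$, $X_2=c_{21}X_1\vee Z_2$, $X_3=c_{31}X_1\vee Z_3$, $X_4=c_{42}X_2\vee c_{43}X_3\vee Z_4$, with $Z_1,Z_2,Z_3,Z_4$ independent positive random variables. Then $X_4 = c_{42}X_2\vee c_{43}Z_3\vee Z_4$, and consequently $X_1$ and $X_4$ are conditionally independent given $X_2$. -/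
open MeasureTheory ProbabilityTheory
open MeasurableSpace

lemma aux_condIndep {Ω : Type*} {m' mA mB : MeasurableSpace Ω}
    {mΩ : MeasurableSpace Ω} [StandardBorelSpace Ω]
    {μ : Measure Ω} [IsProbabilityMeasure μ]
    (hA : mA ≤ mΩ) (hB : mB ≤ mΩ) (h'A : m' ≤ mA)
    (hind : Indep mA mB μ) :
    CondIndep (mΩ := mΩ) m' mA (m' ⊔ mB) (h'A.trans hA) (μ := μ) := by
  have hm' : m' ≤ mΩ := h'A.trans hA
  set p2 : Set (Set Ω) := {s | ∃ c b, MeasurableSet[m'] c ∧ MeasurableSet[mB] b ∧ s = c ∩ b}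
    with hp2def
  have hp2m : ∀ s ∈ p2, MeasurableSet[mΩ] s := by
    rintro s ⟨c, b, hc, hb, rfl⟩
    exact (hm' _ hc).inter (hB _ hb)
  -- key computation
  have K1 : ∀ b : Set Ω, MeasurableSet[mB] b → ∀ d : Set Ω, MeasurableSet[mA] d →
      (μ⟦d ∩ b | m'⟧) =ᵐ[μ] fun ω => (μ b).toReal * (μ⟦d | m'⟧) ω := by
    intro b hb d hd
    have hd' : MeasurableSet[mΩ] d := hA _ hd
    have hb' : MeasurableSet[mΩ] b := hB _ hb
    have hint_b : Integrable (b.indicator (fun _ => (1:ℝ))) μ :=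
      (integrable_const (1:ℝ)).indicator hb'
    have hint_db : Integrable ((d ∩ b).indicator (fun _ => (1:ℝ))) μ :=
      (integrable_const (1:ℝ)).indicator (hd'.inter hb')
    have hsplit : (d ∩ b).indicator (fun _ => (1:ℝ))
        = d.indicator (fun _ => (1:ℝ)) * b.indicator (fun _ => (1:ℝ)) := by
      exact (Set.inter_indicator_one (s := d) (t := b) (M₀ := ℝ))
    -- condexp given mA
    have step1 : μ[(d ∩ b).indicator (fun _ => (1:ℝ)) | mA]
        =ᵐ[μ] fun ω => (μ b).toReal * d.indicator (fun _ => (1:ℝ)) ω := by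
      have h1 : μ[(d ∩ b).indicator (fun _ => (1:ℝ)) | mA]
          =ᵐ[μ] d.indicator (fun _ => (1:ℝ)) * μ[b.indicator (fun _ => (1:ℝ)) | mA] := by
        rw [hsplit]
        exact condExp_mul_of_stronglyMeasurable_left (stronglyMeasurable_const.indicator hd)
          (by rw [← hsplit]; exact hint_db) hint_b
      have h2 : μ[b.indicator (fun _ => (1:ℝ)) | mA] =ᵐ[μ] fun _ => (μ b).toReal := by
        have h3 := condExp_indep_eq (μ := μ) (m₁ := mB) (m₂ := mA)
          (f := b.indicator (fun _ => (1:ℝ))) hB hA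
          (stronglyMeasurable_const.indicator hb) hind.symm
        refine h3.trans ?_
        have h4 : μ[b.indicator (fun _ => (1:ℝ))] = (μ b).toReal := by
          rw [integral_indicator hb']; simp; rfl
        rw [h4]
      filter_upwards [h1, h2] with ω h1 h2
      rw [h1, Pi.mul_apply, h2, mul_comm]
    -- tower
    have tower : (μ⟦d ∩ b | m'⟧)
        =ᵐ[μ] μ[μ[(d ∩ b).indicator (fun _ => (1:ℝ)) | mA] | m'] :=
      (condExp_condExp_of_le (μ := μ) (f := (d ∩ b).indicator (fun _ => (1:ℝ))) h'A hA).symm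
    refine tower.trans ?_
    refine (condExp_congr_ae step1).trans ?_
    have hsmul : (fun ω => (μ b).toReal * d.indicator (fun _ => (1:ℝ)) ω)
        = (μ b).toReal • d.indicator (fun _ => (1:ℝ)) := by
      funext ω; simp
    rw [hsmul]
    refine (condExp_smul _ _ _).trans ?_
    filter_upwards with ω
    simp
  refine CondIndepSets.condIndep (μ := μ) (p2 := p2) hA (sup_le hm' hB) (@isPiSystem_measurableSet Ω mA) ?_
    (@generateFrom_measurableSet Ω mA).symm ?_ ?_
  · -- IsPiSystem p2
    rintro s ⟨c₁, b₁, hc₁, hb₁, rfl⟩ t ⟨c₂, b₂, hc₂, hb₂, rfl⟩ -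
    exact ⟨c₁ ∩ c₂, b₁ ∩ b₂, hc₁.inter hc₂, hb₁.inter hb₂, by
      rw [Set.inter_inter_inter_comm]⟩
  · -- generateFrom p2 = m' ⊔ mB
    refine le_antisymm (sup_le ?_ ?_) (generateFrom_le ?_)
    · intro s hs
      exact measurableSet_generateFrom ⟨s, Set.univ, hs, MeasurableSet.univ,
        (Set.inter_univ s).symm⟩
    · intro s hs
      exact measurableSet_generateFrom ⟨Set.univ, s, MeasurableSet.univ, hs,
        (Set.univ_inter s).symm⟩
    · rintro s ⟨c, b, hc, hb, rfl⟩
      exact ((le_sup_left : m' ≤ m' ⊔ mB) _ hc).inter ((le_sup_right : mB ≤ m' ⊔ mB) _ hb)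
  · -- the CondIndepSets statement
    rw [condIndepSets_iff m' hm' {s | MeasurableSet[mA] s} p2 (fun s hs => hA _ hs) hp2m μ]
    rintro t1 t2 h1 ⟨c, b, hc, hb, rfl⟩
    have hc' : MeasurableSet[mA] c := h'A _ hc
    have lhs : (μ⟦t1 ∩ (c ∩ b) | m'⟧)
        =ᵐ[μ] fun ω => (μ b).toReal * (μ⟦t1 ∩ c | m'⟧) ω := by
      rw [← Set.inter_assoc]
      exact K1 b hb (t1 ∩ c) (h1.inter hc')
    have pullc : (μ⟦t1 ∩ c | m'⟧)
        =ᵐ[μ] c.indicator (fun _ => (1:ℝ)) * (μ⟦t1 | m'⟧) := by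
      have heq : (t1 ∩ c).indicator (fun _ => (1:ℝ))
          = c.indicator (fun _ => (1:ℝ)) * t1.indicator (fun _ => (1:ℝ)) := by
        rw [Set.inter_comm]
        exact (Set.inter_indicator_one (s := c) (t := t1) (M₀ := ℝ))
      calc (μ⟦t1 ∩ c | m'⟧)
          = μ[(c.indicator (fun _ => (1:ℝ)) * t1.indicator (fun _ => (1:ℝ))) | m'] := by rw [heq]
        _ =ᵐ[μ] c.indicator (fun _ => (1:ℝ)) * (μ⟦t1 | m'⟧) :=
            condExp_mul_of_stronglyMeasurable_left (stronglyMeasurable_const.indicator hc)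
              (by rw [← heq]
                  exact (integrable_const (1:ℝ)).indicator ((hA _ h1).inter (hm' _ hc)))
              ((integrable_const (1:ℝ)).indicator (hA _ h1))
    have hcid : (μ⟦c | m'⟧) = c.indicator (fun _ => (1:ℝ)) :=
      condExp_of_stronglyMeasurable hm' (stronglyMeasurable_const.indicator hc)
        ((integrable_const (1:ℝ)).indicator (hm' _ hc))
    have rhs1 : (μ⟦c ∩ b | m'⟧)
        =ᵐ[μ] fun ω => (μ b).toReal * c.indicator (fun _ => (1:ℝ)) ω := by
      refine (K1 b hb c hc').trans ?_
      rw [hcid]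
    filter_upwards [lhs, pullc, rhs1] with ω e1 e2 e3
    simp only [Pi.mul_apply] at e2 ⊢
    rw [e1, e2, e3]
    ring


/-- Diamond: on the DAG `1 → 2, 1 → 3, 2 → 4, 3 → 4` with positive coefficients satisfying
`c_{42} c_{21} ≥ c_{43} c_{31}`, one has `X_4 = c_{42} X_2 ∨ c_{43} Z_3 ∨ Z_4`, and
consequently `X_1` and `X_4` are conditionally independent given `X_2`. -/
theorem stmt18 {Ω : Type*} {mΩ : MeasurableSpace Ω} [StandardBorelSpace Ω] [Nonempty Ω]
    (μ : Measure Ω) [IsProbabilityMeasure μ]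
    (Z : Fin 4 → Ω → ℝ) (hmeas : ∀ i, Measurable (Z i))
    (hindep : iIndepFun Z μ)
    (hpos : ∀ i ω, 0 < Z i ω)
    (c21 c31 c42 c43 : ℝ)
    (h21 : 0 < c21) (h31 : 0 < c31) (h42 : 0 < c42) (h43 : 0 < c43)
    (hcrit : c43 * c31 ≤ c42 * c21)
    (X1 X2 X3 X4 : Ω → ℝ)
    (hX1 : X1 = fun ω => Z 0 ω)
    (hX2 : X2 = fun ω => c21 * X1 ω ⊔ Z 1 ω)
    (hX3 : X3 = fun ω => c31 * X1 ω ⊔ Z 2 ω)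
    (hX4 : X4 = fun ω => c42 * X2 ω ⊔ c43 * X3 ω ⊔ Z 3 ω)
    (hm : MeasurableSpace.comap X2 inferInstance ≤ mΩ) :
    (∀ ω, X4 ω = c42 * X2 ω ⊔ c43 * Z 2 ω ⊔ Z 3 ω) ∧
    CondIndepFun (MeasurableSpace.comap X2 inferInstance) hm X1 X4 μ := by
  -- Part 1: the algebraic identity
  have hpt : ∀ ω, X4 ω = c42 * X2 ω ⊔ c43 * Z 2 ω ⊔ Z 3 ω := by
    intro ω
    have h1 : c21 * Z 0 ω ≤ X2 ω := by
      rw [hX2, hX1]; exact le_max_left _ _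
    have hx2 : c43 * (c31 * Z 0 ω) ≤ c42 * X2 ω := by
      calc c43 * (c31 * Z 0 ω) = c43 * c31 * Z 0 ω := by ring
        _ ≤ c42 * c21 * Z 0 ω := mul_le_mul_of_nonneg_right hcrit (hpos 0 ω).le
        _ = c42 * (c21 * Z 0 ω) := by ring
        _ ≤ c42 * X2 ω := mul_le_mul_of_nonneg_left h1 h42.le
    have hdist : c43 * (c31 * Z 0 ω ⊔ Z 2 ω) = c43 * (c31 * Z 0 ω) ⊔ c43 * Z 2 ω :=
      mul_max_of_nonneg _ _ h43.le
    simp only [hX4, hX3, hX1]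
    rw [hdist]
    congr 1
    rw [← sup_assoc, sup_eq_left.mpr hx2]
  refine ⟨hpt, ?_⟩
  -- σ-algebras
  set V : Ω → ℝ × ℝ := fun ω => (Z 0 ω, Z 1 ω) with hV
  set W : Ω → ℝ × ℝ := fun ω => (Z 2 ω, Z 3 ω) with hW
  have hmV : Measurable V := (hmeas 0).prodMk (hmeas 1)
  have hmW : Measurable W := (hmeas 2).prodMk (hmeas 3)
  set mA := MeasurableSpace.comap V inferInstance with hmA
  set mB := MeasurableSpace.comap W inferInstance with hmB
  have hA : mA ≤ mΩ := hmV.comap_le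
  have hB : mB ≤ mΩ := hmW.comap_le
  -- comap X2 ≤ mA
  have hX2V : X2 = (fun p : ℝ × ℝ => c21 * p.1 ⊔ p.2) ∘ V := by
    funext ω; rw [hX2, hX1]; rfl
  have h'A : MeasurableSpace.comap X2 inferInstance ≤ mA := by
    rw [hX2V, ← MeasurableSpace.comap_comp]
    exact MeasurableSpace.comap_mono
      (Measurable.comap_le ((measurable_fst.const_mul c21).sup measurable_snd))
  -- comap X1 ≤ mA
  have hX1A : MeasurableSpace.comap X1 inferInstance ≤ mA := by
    have hX1V : X1 = Prod.fst ∘ V := by funext ω; rw [hX1]; rfl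
    rw [hX1V, ← MeasurableSpace.comap_comp]
    exact MeasurableSpace.comap_mono (Measurable.comap_le measurable_fst)
  -- comap X4 ≤ comap X2 ⊔ mB
  have hX4V : X4 = (fun p : ℝ × (ℝ × ℝ) => c42 * p.1 ⊔ c43 * p.2.1 ⊔ p.2.2)
      ∘ (fun ω => (X2 ω, W ω)) := by
    funext ω; exact hpt ω
  have hsub4 : MeasurableSpace.comap X4 inferInstance
      ≤ MeasurableSpace.comap X2 inferInstance ⊔ mB := by
    rw [hX4V, ← MeasurableSpace.comap_comp]
    refine le_trans (MeasurableSpace.comap_mono (Measurable.comap_le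
      (((measurable_fst.const_mul c42).sup
        ((measurable_fst.comp measurable_snd).const_mul c43)).sup
        (measurable_snd.comp measurable_snd)))) ?_
    have heq : MeasurableSpace.comap (fun ω => (X2 ω, W ω)) Prod.instMeasurableSpace
        = MeasurableSpace.comap X2 inferInstance ⊔ mB := by
      rw [show (Prod.instMeasurableSpace : MeasurableSpace (ℝ × (ℝ × ℝ)))
          = MeasurableSpace.comap Prod.fst inferInstance
            ⊔ MeasurableSpace.comap Prod.snd inferInstance from rfl,
        MeasurableSpace.comap_sup, MeasurableSpace.comap_comp, MeasurableSpace.comap_comp]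
      rfl
    rw [heq]
  -- independence of V and W
  have hVW : Indep mA mB μ := by
    have h := hindep.indepFun_finset {0, 1} {2, 3} (by decide) hmeas
    have hφ : Measurable (fun g : ({0, 1} : Finset (Fin 4)) → ℝ =>
        (g ⟨0, by decide⟩, g ⟨1, by decide⟩)) :=
      (measurable_pi_apply _).prodMk (measurable_pi_apply _)
    have hψ : Measurable (fun g : ({2, 3} : Finset (Fin 4)) → ℝ =>
        (g ⟨2, by decide⟩, g ⟨3, by decide⟩)) :=
      (measurable_pi_apply _).prodMk (measurable_pi_apply _)
    have h2 := h.comp hφ hψ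
    exact h2
  have hCI := aux_condIndep (μ := μ) hA hB h'A hVW
  have hCI2 : CondIndep (mΩ := mΩ) (MeasurableSpace.comap X2 inferInstance)
      (MeasurableSpace.comap X1 inferInstance) (MeasurableSpace.comap X4 inferInstance) hm μ :=
    condIndep_of_condIndep_of_le_right (condIndep_of_condIndep_of_le_left hCI hX1A) hsub4
  exact (condIndepFun_iff_condIndep _ _ X1 X4 μ).mpr hCI2
end
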